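/- Suppose Hypothesis (H) holds and P(x,M) = 1 for every x ∈ M (so that Z = ∅). Then P admits a unique stationary Borel probability measure μ (i.e. ℒμ = μ), and the support of μ is all of M. -/

import Mathlib

open MeasureTheory Filter Topology

noncomputable section

variable {M : Type*}

/-- The iterated transition kernel: `iterP P 0 x = δ_x` (identity kernel), so that
`iterP P 1 = P` and `iterP P (n+1) x A = ∫ iterP P n y A ∂(P x)`. -/
def iterP [MeasurableSpace M] (P : M → Measure M) : ℕ → M → Measure M
  | 0 => fun x => Measure.dirac x
  | n + 1 => fun x => (P x).bind (iterP P n)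

/-- Hypothesis (H) of the paper: `P` is a measurable sub-Markovian kernel; (H1) each
`P x` is absolutely continuous w.r.t. `ρ` and `x ↦ dP(x,·)/dρ` is continuous into `L¹(ρ)`;
(H2) `ρ(M∖Z) > 0` where `Z = {x | P(x,M) = 0}`, and from every non-escaping point every
nonempty open set is reached with positive probability in some positive time. -/
structure HypH [MetricSpace M] [MeasurableSpace M] (P : M → Measure M) (ρ : Measure M) : Prop where
  meas : Measurable P
  subMarkov : ∀ x, P x Set.univ ≤ 1
  absCont : ∀ x, P x ≪ ρ
  densityCont : ∀ ε : ℝ, 0 < ε → ∃ δ : ℝ, 0 < δ ∧ ∀ x z : M, dist x z < δ →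
      (∫⁻ y, ((P x).rnDeriv ρ y - (P z).rnDeriv ρ y)
        + ((P z).rnDeriv ρ y - (P x).rnDeriv ρ y) ∂ρ) < ENNReal.ofReal ε
  rhoPos : 0 < ρ {x | P x Set.univ ≠ 0}
  irred : ∀ x, P x Set.univ ≠ 0 → ∀ A : Set M, IsOpen A → A.Nonempty →
      ∃ n : ℕ, 0 < n ∧ 0 < iterP P n x A

namespace StationaryAux

open scoped ENNReal NNReal

section Meas

variable [MeasurableSpace M]

lemma measurable_iterP {P : M → Measure M} (hP : Measurable P) :
    ∀ n, Measurable (iterP P n)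
  | 0 => Measure.measurable_dirac
  | (n+1) => (Measure.measurable_bind' (measurable_iterP hP n)).comp hP

lemma iterP_univ {P : M → Measure M} (hP : Measurable P) (hfull : ∀ x, P x Set.univ = 1) :
    ∀ n x, iterP P n x Set.univ = 1
  | 0, x => by simp [iterP]
  | (n+1), x => by
    show (P x).bind (iterP P n) Set.univ = 1
    rw [Measure.bind_apply MeasurableSet.univ (measurable_iterP hP n).aemeasurable]
    rw [lintegral_congr (fun y => iterP_univ hP hfull n y), lintegral_one, hfull]

lemma iterP_bind {P : M → Measure M} (hP : Measurable P) :
    ∀ n x, (iterP P n x).bind P = iterP P (n + 1) x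
  | 0, x => by
    show (Measure.dirac x).bind P = (P x).bind (iterP P 0)
    rw [Measure.dirac_bind hP]
    show P x = (P x).bind (fun y => Measure.dirac y)
    exact Measure.bind_dirac.symm
  | (n+1), x => by
    show ((P x).bind (iterP P n)).bind P = (P x).bind (iterP P (n+1))
    rw [Measure.bind_bind (measurable_iterP hP n).aemeasurable hP.aemeasurable]
    exact congrArg _ (funext fun y => iterP_bind hP n y)

lemma bind_iterP_eq {P : M → Measure M} (hP : Measurable P) {μ : Measure M}
    (hinv : μ.bind P = μ) : ∀ n, μ.bind (iterP P n) = μ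
  | 0 => Measure.bind_dirac
  | (n+1) => by
    have h : μ.bind (iterP P (n+1)) = (μ.bind P).bind (iterP P n) := by
      rw [Measure.bind_bind hP.aemeasurable (measurable_iterP hP n).aemeasurable]
      rfl
    rw [h, hinv, bind_iterP_eq hP hinv n]

end Meas

section FS

variable [MetricSpace M] [MeasurableSpace M] [BorelSpace M]

lemma full_support {ρ : Measure M} {P : M → Measure M} (hH : HypH P ρ)
    (hfull : ∀ x, P x Set.univ = 1) {μ : Measure M} (hinv : μ.bind P = μ) (hne : μ ≠ 0)
    {U : Set M} (hU : IsOpen U) (hUne : U.Nonempty) : 0 < μ U := by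
  rw [pos_iff_ne_zero]
  intro h0
  haveI : (ae μ).NeBot := ae_neBot.mpr hne
  have hall : ∀ n, ∀ᵐ x ∂μ, iterP P n x U = 0 := by
    intro n
    have h1 : μ U = ∫⁻ x, iterP P n x U ∂μ := by
      conv_lhs => rw [← bind_iterP_eq hH.meas hinv n]
      exact Measure.bind_apply hU.measurableSet (measurable_iterP hH.meas n).aemeasurable
    have h2 : ∫⁻ x, iterP P n x U ∂μ = 0 := by rw [← h1]; exact h0
    have := (lintegral_eq_zero_iff
      ((Measure.measurable_coe hU.measurableSet).comp (measurable_iterP hH.meas n))).mp h2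
    exact this.mono (fun x hx => hx)
  obtain ⟨x, hx⟩ := (ae_all_iff.mpr hall).exists
  obtain ⟨n, -, hpos⟩ := hH.irred x (by rw [hfull]; exact one_ne_zero) U hU hUne
  exact hpos.ne' (hx n)

end FS


section Cont

variable [MetricSpace M] [MeasurableSpace M] [BorelSpace M]

lemma nnnorm_toReal_sub_le {a b : ℝ≥0∞} (ha : a ≠ ⊤) (hb : b ≠ ⊤) :
    (‖a.toReal - b.toReal‖₊ : ℝ≥0∞) ≤ (a - b) + (b - a) := by
  have key : ∀ u v : ℝ≥0∞, u ≠ ⊤ → v ≠ ⊤ → u ≤ v →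
      (‖u.toReal - v.toReal‖₊ : ℝ≥0∞) ≤ (u - v) + (v - u) := by
    intro u v hu hv huv
    rw [← enorm_eq_nnnorm, Real.enorm_eq_ofReal_abs, abs_sub_comm,
      abs_of_nonneg (sub_nonneg.mpr (ENNReal.toReal_mono hv huv)),
      ← ENNReal.toReal_sub_of_le huv hv,
      ENNReal.ofReal_toReal (by exact ((tsub_le_self).trans_lt (lt_top_iff_ne_top.mpr hv)).ne)]
    exact le_add_self
  rcases le_total a b with h | h
  · exact key a b ha hb h
  · calc (‖a.toReal - b.toReal‖₊ : ℝ≥0∞) = ‖b.toReal - a.toReal‖₊ := by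
          rw [show ‖a.toReal - b.toReal‖₊ = ‖b.toReal - a.toReal‖₊ from by rw [← neg_sub, nnnorm_neg]]
    _ ≤ (b - a) + (a - b) := key b a hb ha h
    _ = (a - b) + (b - a) := add_comm _ _

variable {ρ : Measure M} [IsFiniteMeasure ρ] {P : M → Measure M}

lemma hypH_finP (hH : HypH P ρ) (x : M) : IsFiniteMeasure (P x) :=
  ⟨lt_of_le_of_lt (hH.subMarkov x) ENNReal.one_lt_top⟩

lemma meas_apply_ne_top (hH : HypH P ρ) (x : M) (A : Set M) : P x A ≠ ⊤ :=
  (((measure_mono (Set.subset_univ A)).trans (hH.subMarkov x)).trans_lt ENNReal.one_lt_top).ne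

lemma meas_eq_setLint (hH : HypH P ρ) {A : Set M} (hA : MeasurableSet A) (x : M) :
    P x A = ∫⁻ y in A, (P x).rnDeriv ρ y ∂ρ := by
  haveI := hypH_finP hH x
  conv_lhs => rw [← Measure.withDensity_rnDeriv_eq (P x) ρ (hH.absCont x)]
  exact withDensity_apply _ hA

lemma meas_apply_le (hH : HypH P ρ) {A : Set M} (hA : MeasurableSet A) (x z : M) :
    P x A ≤ P z A + ∫⁻ y, ((P x).rnDeriv ρ y - (P z).rnDeriv ρ y)
        + ((P z).rnDeriv ρ y - (P x).rnDeriv ρ y) ∂ρ := by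
  rw [meas_eq_setLint hH hA x, meas_eq_setLint hH hA z]
  have step : ∫⁻ y in A, ((P x).rnDeriv ρ y - (P z).rnDeriv ρ y) ∂ρ
      ≤ ∫⁻ y, ((P x).rnDeriv ρ y - (P z).rnDeriv ρ y)
          + ((P z).rnDeriv ρ y - (P x).rnDeriv ρ y) ∂ρ :=
    le_trans (setLIntegral_le_lintegral _ _) (lintegral_mono fun y => le_self_add)
  calc ∫⁻ y in A, (P x).rnDeriv ρ y ∂ρ
      ≤ ∫⁻ y in A, ((P z).rnDeriv ρ y + ((P x).rnDeriv ρ y - (P z).rnDeriv ρ y)) ∂ρ :=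
        lintegral_mono fun y => le_add_tsub
    _ = (∫⁻ y in A, (P z).rnDeriv ρ y ∂ρ)
        + ∫⁻ y in A, ((P x).rnDeriv ρ y - (P z).rnDeriv ρ y) ∂ρ :=
        lintegral_add_left (Measure.measurable_rnDeriv _ _) _
    _ ≤ _ := add_le_add_right step _

lemma cont_toReal (hH : HypH P ρ) {A : Set M} (hA : MeasurableSet A) :
    Continuous fun x => (P x A).toReal := by
  rw [Metric.continuous_iff]
  intro b ε hε
  obtain ⟨δ, hδ, hd⟩ := hH.densityCont ε hε
  refine ⟨δ, hδ, fun a hab => ?_⟩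
  set I := ∫⁻ y, ((P a).rnDeriv ρ y - (P b).rnDeriv ρ y)
      + ((P b).rnDeriv ρ y - (P a).rnDeriv ρ y) ∂ρ with hIdef
  have hI : I < ENNReal.ofReal ε := hd a b hab
  have hIfin : I ≠ ⊤ := hI.ne_top
  have hsymm : ∫⁻ y, ((P b).rnDeriv ρ y - (P a).rnDeriv ρ y)
      + ((P a).rnDeriv ρ y - (P b).rnDeriv ρ y) ∂ρ = I := lintegral_congr fun y => add_comm _ _
  have hafin : P a A ≠ ⊤ := meas_apply_ne_top hH a A
  have hbfin : P b A ≠ ⊤ := meas_apply_ne_top hH b A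
  have h1 : P a A ≤ P b A + I := meas_apply_le hH hA a b
  have h2 : P b A ≤ P a A + I := by
    have := meas_apply_le hH hA b a
    rwa [hsymm] at this
  have t1 : (P a A).toReal ≤ (P b A).toReal + I.toReal := by
    rw [← ENNReal.toReal_add hbfin hIfin]
    exact ENNReal.toReal_mono (by simp [hbfin, hIfin, ENNReal.add_ne_top]) h1
  have t2 : (P b A).toReal ≤ (P a A).toReal + I.toReal := by
    rw [← ENNReal.toReal_add hafin hIfin]
    exact ENNReal.toReal_mono (by simp [hafin, hIfin, ENNReal.add_ne_top]) h2
  have hIε : I.toReal < ε := by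
    have := (ENNReal.toReal_lt_toReal hIfin ENNReal.ofReal_ne_top).mpr hI
    rwa [ENNReal.toReal_ofReal hε.le] at this
  rw [Real.dist_eq]
  have : |(P a A).toReal - (P b A).toReal| ≤ I.toReal :=
    abs_sub_le_iff.mpr ⟨by linarith, by linarith⟩
  linarith

end Cont
section Uniq

variable [MetricSpace M] [MeasurableSpace M] [BorelSpace M]
variable {ρ : Measure M} [IsFiniteMeasure ρ] {P : M → Measure M}

lemma bind_univ_eq (hH : HypH P ρ) (hfull : ∀ x, P x Set.univ = 1) (μ : Measure M) :
    μ.bind P Set.univ = μ Set.univ := by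
  rw [Measure.bind_apply MeasurableSet.univ hH.meas.aemeasurable]
  simp only [hfull, lintegral_one]

lemma restrict_sub_apply {μ ν : Measure M} [IsFiniteMeasure ν] {s : Set M}
    (hs : MeasurableSet s)
    (h1 : ∀ t, MeasurableSet t → t ⊆ s → ν t ≤ μ t) {t : Set M} (ht : MeasurableSet t) :
    (μ.restrict s - ν.restrict s) t = μ (t ∩ s) - ν (t ∩ s) := by
  have hle : ν.restrict s ≤ μ.restrict s := Measure.le_iff.mpr fun u hu => by
    rw [Measure.restrict_apply hu, Measure.restrict_apply hu]
    exact h1 _ (hu.inter hs) Set.inter_subset_right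
  rw [Measure.sub_apply ht hle, Measure.restrict_apply ht, Measure.restrict_apply ht]

lemma sub_invariant (hH : HypH P ρ) (hfull : ∀ x, P x Set.univ = 1) {μ ν : Measure M}
    [IsProbabilityMeasure μ] [IsProbabilityMeasure ν]
    (hμ : μ.bind P = μ) (hν : ν.bind P = ν) {s : Set M} (hs : MeasurableSet s)
    (h1 : ∀ t, MeasurableSet t → t ⊆ s → ν t ≤ μ t)
    (h2 : ∀ t, MeasurableSet t → t ⊆ sᶜ → μ t ≤ ν t) :
    (μ.restrict s - ν.restrict s).bind P = μ.restrict s - ν.restrict s := by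
  set ξ := μ.restrict s - ν.restrict s with hξdef
  have hle : ν.restrict s ≤ μ.restrict s := Measure.le_iff.mpr fun u hu => by
    rw [Measure.restrict_apply hu, Measure.restrict_apply hu]
    exact h1 _ (hu.inter hs) Set.inter_subset_right
  have hξ_apply : ∀ t, MeasurableSet t → ξ t = μ (t ∩ s) - ν (t ∩ s) :=
    fun t ht => restrict_sub_apply hs h1 ht
  have hξ_add : ξ + ν.restrict s = μ.restrict s := Measure.sub_add_cancel_of_le hle
  have hξ_fin : ∀ t, ξ t ≠ ⊤ := by
    intro t
    have : ξ t ≤ μ.restrict s t := Measure.sub_le t -- maybe needs le_iff'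
    exact (this.trans_lt (measure_lt_top _ _)).ne
  set lam := ξ.bind P with hlamdef
  have hLint : ∀ t, MeasurableSet t → lam t = ∫⁻ x, P x t ∂ξ :=
    fun t ht => Measure.bind_apply ht hH.meas.aemeasurable
  have hmass : lam Set.univ = ξ Set.univ := bind_univ_eq hH hfull ξ
  have hlam_fin : ∀ t, lam t ≠ ⊤ := by
    intro t
    exact ((measure_mono (Set.subset_univ t)).trans_lt
      (by rw [hmass]; exact (hξ_fin Set.univ).lt_top)).ne
  have key0 : ∀ t, MeasurableSet t →
      (∫⁻ x, P x t ∂ξ) + ∫⁻ x in s, P x t ∂ν = ∫⁻ x in s, P x t ∂μ := by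
    intro t ht
    have := (lintegral_add_measure (fun x => P x t) ξ (ν.restrict s)).symm
    rw [hξ_add] at this
    exact this
  have claim2 : ∀ t, MeasurableSet t → t ⊆ s → ξ t ≤ lam t := by
    intro t ht hts
    have hmono : ∫⁻ x in sᶜ, P x t ∂μ ≤ ∫⁻ x in sᶜ, P x t ∂ν := by
      refine lintegral_mono' (Measure.le_iff.mpr fun u hu => ?_) le_rfl
      rw [Measure.restrict_apply hu, Measure.restrict_apply hu]
      exact h2 _ (hu.inter hs.compl) Set.inter_subset_right
    have hμt : μ t = ∫⁻ x in s, P x t ∂μ + ∫⁻ x in sᶜ, P x t ∂μ := by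
      conv_lhs => rw [← hμ]
      rw [Measure.bind_apply ht hH.meas.aemeasurable, ← lintegral_add_compl (fun x => P x t) hs]
    have hνt : ν t = ∫⁻ x in s, P x t ∂ν + ∫⁻ x in sᶜ, P x t ∂ν := by
      conv_lhs => rw [← hν]
      rw [Measure.bind_apply ht hH.meas.aemeasurable, ← lintegral_add_compl (fun x => P x t) hs]
    have hξt : ξ t = μ t - ν t := by
      rw [hξ_apply t ht, Set.inter_eq_self_of_subset_left hts]
    rw [hξt, hLint t ht, tsub_le_iff_right]
    calc μ t = ∫⁻ x in s, P x t ∂μ + ∫⁻ x in sᶜ, P x t ∂μ := hμt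
      _ ≤ ((∫⁻ x, P x t ∂ξ) + ∫⁻ x in s, P x t ∂ν) + ∫⁻ x in sᶜ, P x t ∂ν := by
          rw [key0 t ht]; exact add_le_add_right hmono _
      _ = (∫⁻ x, P x t ∂ξ) + ν t := by rw [hνt, add_assoc]
  have hξs : ξ s = ξ Set.univ := by
    rw [hξ_apply s hs, hξ_apply _ MeasurableSet.univ, Set.inter_self, Set.univ_inter]
  have hcompl0 : lam sᶜ = 0 := by
    have hsplit : lam s + lam sᶜ = lam Set.univ := measure_add_measure_compl hs
    have : lam s + lam sᶜ ≤ lam s + 0 := by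
      rw [add_zero, hsplit, hmass, ← hξs]
      exact claim2 s hs subset_rfl
    have := (ENNReal.add_le_add_iff_left (hlam_fin s)).mp this
    exact le_antisymm this zero_le
  have hall_le : ∀ t, MeasurableSet t → ξ t ≤ lam t := by
    intro t ht
    have h5 : ξ t = ξ (t ∩ s) := by
      rw [hξ_apply t ht, hξ_apply _ (ht.inter hs), Set.inter_assoc, Set.inter_self]
    have h6 : lam (t ∩ s) ≤ lam t := measure_mono Set.inter_subset_left
    rw [h5]
    exact (claim2 _ (ht.inter hs) Set.inter_subset_right).trans h6
  symm
  refine Measure.ext fun t ht => ?_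
  refine le_antisymm (hall_le t ht) ?_
  have hsplit1 : lam t + lam tᶜ = ξ t + ξ tᶜ := by
    rw [measure_add_measure_compl ht, measure_add_measure_compl ht, hmass]
  have : lam t + lam tᶜ ≤ ξ t + lam tᶜ := by
    rw [hsplit1]
    exact add_le_add_right (hall_le tᶜ ht.compl) _
  exact (ENNReal.add_le_add_iff_right (hlam_fin tᶜ)).mp this

end Uniq
section Uniq2

variable [MetricSpace M] [CompactSpace M] [MeasurableSpace M] [BorelSpace M]
variable {ρ : Measure M} [IsFiniteMeasure ρ] {P : M → Measure M}

lemma eq_of_invariant (hH : HypH P ρ) (hfull : ∀ x, P x Set.univ = 1) (μ ν : Measure M)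
    [IsProbabilityMeasure μ] [IsProbabilityMeasure ν]
    (hμ : μ.bind P = μ) (hν : ν.bind P = ν) : μ = ν := by
  by_contra hne
  obtain ⟨s, hs, h1, h2⟩ := hahn_decomposition (μ := μ) (ν := ν)
  have h1' : ∀ t, MeasurableSet t → t ⊆ sᶜ → μ t ≤ ν t := h2
  have h2' : ∀ t, MeasurableSet t → t ⊆ sᶜᶜ → ν t ≤ μ t := fun t ht hts =>
    h1 t ht (by rwa [compl_compl] at hts)
  set ξ := μ.restrict s - ν.restrict s with hξdef
  set ζ := ν.restrict sᶜ - μ.restrict sᶜ with hζdef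
  have hξinv : ξ.bind P = ξ := sub_invariant hH hfull hμ hν hs h1 h2
  have hζinv : ζ.bind P = ζ := sub_invariant hH hfull hν hμ hs.compl h1' h2'
  have hξ_apply : ∀ t, MeasurableSet t → ξ t = μ (t ∩ s) - ν (t ∩ s) :=
    fun t ht => restrict_sub_apply hs h1 ht
  have hζ_apply : ∀ t, MeasurableSet t → ζ t = ν (t ∩ sᶜ) - μ (t ∩ sᶜ) :=
    fun t ht => restrict_sub_apply hs.compl h1' ht
  have hνs_le : ν s ≤ μ s := h1 s hs subset_rfl
  have hμc_le : μ sᶜ ≤ ν sᶜ := h2 sᶜ hs.compl subset_rfl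
  have hξuniv : ξ Set.univ = μ s - ν s := by
    rw [hξ_apply _ MeasurableSet.univ, Set.univ_inter]
  have hζuniv : ζ Set.univ = ν sᶜ - μ sᶜ := by
    rw [hζ_apply _ MeasurableSet.univ, Set.univ_inter]
  -- equal masses
  have hmass_eq : ξ Set.univ = ζ Set.univ := by
    have e1 : (μ s - ν s) + (ν s + μ sᶜ) = (1 : ℝ≥0∞) := by
      rw [← add_assoc, tsub_add_cancel_of_le hνs_le]
      rw [measure_add_measure_compl hs, measure_univ]
    have e2 : (ν sᶜ - μ sᶜ) + (ν s + μ sᶜ) = (1 : ℝ≥0∞) := by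
      rw [add_comm (ν s) (μ sᶜ), ← add_assoc, tsub_add_cancel_of_le hμc_le,
        add_comm (ν sᶜ) (ν s), measure_add_measure_compl hs, measure_univ]
    rw [hξuniv, hζuniv]
    have hw : ν s + μ sᶜ ≠ ⊤ := by
      exact (ENNReal.add_lt_top.mpr ⟨measure_lt_top _ _, measure_lt_top _ _⟩).ne
    exact (ENNReal.add_left_inj hw).mp (e1.trans e2.symm)
  -- nonzero masses
  have hξ0 : ξ Set.univ ≠ 0 := by
    intro hz
    apply hne
    have hζz : ζ Set.univ = 0 := by rw [← hmass_eq, hz]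
    have hs_eq : μ s = ν s := le_antisymm
      (by rw [hξuniv] at hz; exact tsub_eq_zero_iff_le.mp hz) hνs_le
    have hsc_eq : ν sᶜ = μ sᶜ := le_antisymm
      (by rw [hζuniv] at hζz; exact tsub_eq_zero_iff_le.mp hζz) hμc_le
    refine Measure.ext fun t ht => ?_
    have key : ∀ (α β : Measure M) (u : Set M), MeasurableSet u → IsFiniteMeasure α →
        (∀ v, MeasurableSet v → v ⊆ u → β v ≤ α v) → α u = β u →
        ∀ v, MeasurableSet v → v ⊆ u → α v = β v := by
      intro α β u hu hαfin hαβ huu v hv hvu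
      refine le_antisymm ?_ (hαβ v hv hvu)
      have e3 : α v + α (u \ v) = α u := by
        rw [← measure_inter_add_diff u hv, Set.inter_eq_self_of_subset_right hvu]
      have e4 : β v + β (u \ v) = β u := by
        rw [← measure_inter_add_diff u hv, Set.inter_eq_self_of_subset_right hvu]
      have e5 : β (u \ v) ≤ α (u \ v) := hαβ _ (hu.diff hv) Set.diff_subset
      haveI := hαfin
      have h6 : α v + α (u \ v) ≤ β v + α (u \ v) := by
        rw [e3, huu, ← e4]
        exact add_le_add_right e5 _
      exact (ENNReal.add_le_add_iff_right (measure_ne_top _ _)).mp h6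
    have kt1 : μ (t ∩ s) = ν (t ∩ s) :=
      key μ ν s hs inferInstance h1 hs_eq _ (ht.inter hs) Set.inter_subset_right
    have kt2 : ν (t ∩ sᶜ) = μ (t ∩ sᶜ) :=
      key ν μ sᶜ hs.compl inferInstance h1' hsc_eq _ (ht.inter hs.compl)
        Set.inter_subset_right
    calc μ t = μ (t ∩ s) + μ (t ∩ sᶜ) := by
          rw [← measure_inter_add_diff t hs, Set.diff_eq]
      _ = ν (t ∩ s) + ν (t ∩ sᶜ) := by rw [kt1, ← kt2]
      _ = ν t := by rw [← Set.diff_eq, measure_inter_add_diff t hs]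
  have hζ0 : ζ Set.univ ≠ 0 := by rw [← hmass_eq]; exact hξ0
  have hξne : ξ ≠ 0 := fun h => hξ0 (by rw [h]; simp)
  have hζne : ζ ≠ 0 := fun h => hζ0 (by rw [h]; simp)
  -- P x s = 1 everywhere
  have hmeasPs : Measurable fun x => P x s := (Measure.measurable_coe hs).comp hH.meas
  have hle1 : ∀ x, P x s ≤ 1 := fun x =>
    (measure_mono (Set.subset_univ s)).trans (hH.subMarkov x)
  haveI hξfin : IsFiniteMeasure ξ :=
    ⟨((Measure.sub_le Set.univ).trans_lt (measure_lt_top _ _))⟩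
  haveI hζfin : IsFiniteMeasure ζ :=
    ⟨((Measure.sub_le Set.univ).trans_lt (measure_lt_top _ _))⟩
  have hPs1 : ∀ x, P x s = 1 := by
    have hint : ∫⁻ x, P x s ∂ξ = ξ Set.univ := by
      rw [← Measure.bind_apply hs hH.meas.aemeasurable, hξinv, hξ_apply s hs, Set.inter_self, hξuniv]
    have hfin2 : ∫⁻ x, P x s ∂ξ ≠ ⊤ := by
      rw [hint]; exact measure_ne_top _ _
    have hsub : ∫⁻ x, 1 - P x s ∂ξ = 0 := by
      rw [lintegral_sub hmeasPs hfin2 (ae_of_all _ hle1), lintegral_one, hint, tsub_self]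
    have hae : ∀ᵐ x ∂ξ, P x s = 1 := by
      have := (lintegral_eq_zero_iff (measurable_const.sub hmeasPs)).mp hsub
      refine this.mono fun x hx => ?_
      have hx' : (1 : ℝ≥0∞) - P x s = 0 := hx
      exact le_antisymm (hle1 x) (tsub_eq_zero_iff_le.mp hx')
    have hBclosed : IsClosed {x | P x s = 1} := by
      have : {x | P x s = 1} = (fun x => (P x s).toReal) ⁻¹' {1} := by
        ext x; simp [ENNReal.toReal_eq_one_iff]
      rw [this]
      exact isClosed_singleton.preimage (cont_toReal hH hs)
    have hB0 : ξ {x | P x s = 1}ᶜ = 0 := by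
      have := ae_iff.mp hae
      simpa [Set.compl_setOf] using this
    intro x
    by_contra hx
    have hne2 : ({x | P x s = 1}ᶜ : Set M).Nonempty := ⟨x, hx⟩
    have := full_support hH hfull hξinv hξne hBclosed.isOpen_compl hne2
    rw [hB0] at this
    exact lt_irrefl _ this
  have hPs0 : ∀ x, P x s = 0 := by
    have hint : ∫⁻ x, P x s ∂ζ = 0 := by
      rw [← Measure.bind_apply hs hH.meas.aemeasurable, hζinv, hζ_apply s hs]
      simp [Set.inter_compl_self]
    have hae : ∀ᵐ x ∂ζ, P x s = 0 := by
      have := (lintegral_eq_zero_iff hmeasPs).mp hint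
      exact this.mono fun x hx => hx
    have hCclosed : IsClosed {x | P x s = 0} := by
      have : {x | P x s = 0} = (fun x => (P x s).toReal) ⁻¹' {0} := by
        ext x
        simp [ENNReal.toReal_eq_zero_iff, meas_apply_ne_top hH x s]
      rw [this]
      exact isClosed_singleton.preimage (cont_toReal hH hs)
    have hC0 : ζ {x | P x s = 0}ᶜ = 0 := by
      have := ae_iff.mp hae
      simpa [Set.compl_setOf] using this
    intro x
    by_contra hx
    have hne2 : ({x | P x s = 0}ᶜ : Set M).Nonempty := ⟨x, hx⟩
    have := full_support hH hfull hζinv hζne hCclosed.isOpen_compl hne2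
    rw [hC0] at this
    exact lt_irrefl _ this
  have hMne : Nonempty M := by
    have hne' : ({x | P x Set.univ ≠ 0} : Set M).Nonempty := by
      refine Set.nonempty_iff_ne_empty.mpr fun h => hH.rhoPos.ne' ?_
      rw [h, measure_empty]
    exact ⟨hne'.choose⟩
  obtain ⟨x₀⟩ := hMne
  exact one_ne_zero ((hPs1 x₀).symm.trans (hPs0 x₀))

end Uniq2
section LpPart

variable [MetricSpace M] [CompactSpace M] [MeasurableSpace M] [BorelSpace M]
variable {ρ : Measure M} [IsFiniteMeasure ρ] {P : M → Measure M}

lemma memL1_density (hH : HypH P ρ) (x : M) :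
    MemLp (fun y => ((P x).rnDeriv ρ y).toReal) 1 ρ := by
  haveI := hypH_finP hH x
  exact memLp_one_iff_integrable.mpr Measure.integrable_toReal_rnDeriv

def Gmap (hH : HypH P ρ) (x : M) : Lp ℝ 1 ρ := (memL1_density hH x).toLp _

lemma Gmap_coe (hH : HypH P ρ) (x : M) :
    (Gmap hH x : M → ℝ) =ᵐ[ρ] fun y => ((P x).rnDeriv ρ y).toReal :=
  MemLp.coeFn_toLp _

lemma ofReal_norm_Lp (f : Lp ℝ 1 ρ) :
    ENNReal.ofReal ‖f‖ = ∫⁻ y, (‖f y‖₊ : ℝ≥0∞) ∂ρ := by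
  rw [Lp.norm_def, ENNReal.ofReal_toReal (Lp.eLpNorm_ne_top f),
    eLpNorm_one_eq_lintegral_enorm]; rfl

lemma norm_G_sub_le (hH : HypH P ρ) (x z : M) :
    ENNReal.ofReal ‖Gmap hH x - Gmap hH z‖ ≤
      ∫⁻ y, ((P x).rnDeriv ρ y - (P z).rnDeriv ρ y)
        + ((P z).rnDeriv ρ y - (P x).rnDeriv ρ y) ∂ρ := by
  haveI := hypH_finP hH x
  haveI := hypH_finP hH z
  rw [ofReal_norm_Lp]
  refine lintegral_mono_ae ?_
  filter_upwards [Lp.coeFn_sub (Gmap hH x) (Gmap hH z), Gmap_coe hH x, Gmap_coe hH z,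
    Measure.rnDeriv_lt_top (P x) ρ, Measure.rnDeriv_lt_top (P z) ρ] with y h1 h2 h3 h4 h5
  rw [h1, Pi.sub_apply, h2, h3]
  exact nnnorm_toReal_sub_le h4.ne h5.ne

lemma continuous_Gmap (hH : HypH P ρ) : Continuous (Gmap hH) := by
  rw [Metric.continuous_iff]
  intro b ε hε
  obtain ⟨δ, hδ, hd⟩ := hH.densityCont ε hε
  refine ⟨δ, hδ, fun a hab => ?_⟩
  rw [dist_eq_norm]
  exact (ENNReal.ofReal_lt_ofReal_iff hε).mp
    ((norm_G_sub_le hH a b).trans_lt (hd a b hab))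

def phiA (ρ : Measure M) [IsFiniteMeasure ρ] (A : Set M) : Lp ℝ 1 ρ →L[ℝ] ℝ :=
  LinearMap.mkContinuous
    { toFun := fun f => ∫ y in A, f y ∂ρ
      map_add' := fun f g => by
        have h1 : ∫ y in A, (f + g : Lp ℝ 1 ρ) y ∂ρ = ∫ y in A, (f y + g y) ∂ρ :=
          integral_congr_ae (ae_restrict_of_ae ((Lp.coeFn_add f g).mono fun y hy => by
            rw [hy]; rfl))
        show ∫ y in A, (f + g : Lp ℝ 1 ρ) y ∂ρ = _
        rw [h1,
          integral_add ((L1.integrable_coeFn f).restrict) ((L1.integrable_coeFn g).restrict)]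
      map_smul' := fun c f => by
        have h1 : ∫ y in A, (c • f : Lp ℝ 1 ρ) y ∂ρ = ∫ y in A, c • (f y) ∂ρ :=
          integral_congr_ae (ae_restrict_of_ae ((Lp.coeFn_smul c f).mono fun y hy => by
            rw [hy]; rfl))
        show ∫ y in A, (c • f : Lp ℝ 1 ρ) y ∂ρ = _
        rw [h1, integral_smul]
        rfl }
    1
    (fun f => by
      rw [one_mul]
      calc ‖∫ y in A, f y ∂ρ‖ ≤ ∫ y in A, ‖f y‖ ∂ρ := norm_integral_le_integral_norm _
        _ ≤ ∫ y, ‖f y‖ ∂ρ := setIntegral_le_integral (L1.integrable_coeFn f).norm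
              (ae_of_all _ fun y => norm_nonneg _)
        _ = ‖f‖ := by
            rw [integral_norm_eq_lintegral_enorm (Lp.aestronglyMeasurable f),
              Lp.norm_def, eLpNorm_one_eq_lintegral_enorm])

lemma phiA_apply (A : Set M) (f : Lp ℝ 1 ρ) : phiA ρ A f = ∫ y in A, f y ∂ρ := rfl

lemma phiA_Gmap (hH : HypH P ρ) {A : Set M} (hA : MeasurableSet A) (x : M) :
    phiA ρ A (Gmap hH x) = (P x A).toReal := by
  haveI := hypH_finP hH x
  have h1 : phiA ρ A (Gmap hH x) = ∫ y in A, ((P x).rnDeriv ρ y).toReal ∂ρ :=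
    integral_congr_ae (ae_restrict_of_ae (Gmap_coe hH x))
  rw [h1, integral_toReal ((Measure.measurable_rnDeriv _ _).aemeasurable.restrict)
      (ae_restrict_of_ae (Measure.rnDeriv_lt_top _ _)), ← meas_eq_setLint hH hA x]

lemma integrable_Gmap (hH : HypH P ρ) (ν : Measure M) [IsFiniteMeasure ν] :
    Integrable (Gmap hH) ν := by
  obtain ⟨C, hC⟩ := (isCompact_range (continuous_Gmap hH)).isBounded.exists_norm_le
  exact ⟨(continuous_Gmap hH).aestronglyMeasurable,
    HasFiniteIntegral.of_bounded (ae_of_all _ fun x => hC _ (Set.mem_range_self x))⟩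

lemma setIntegral_D (hH : HypH P ρ) (ν : Measure M) [IsFiniteMeasure ν]
    {A : Set M} (hA : MeasurableSet A) :
    ∫ y in A, (∫ x, Gmap hH x ∂ν : Lp ℝ 1 ρ) y ∂ρ = ∫ x, (P x A).toReal ∂ν := by
  have h1 : ∫ x, phiA ρ A (Gmap hH x) ∂ν = phiA ρ A (∫ x, Gmap hH x ∂ν) :=
    (phiA ρ A).integral_comp_comm (integrable_Gmap hH ν)
  rw [← phiA_apply, ← h1]
  exact integral_congr_ae (ae_of_all _ fun x => phiA_Gmap hH hA x)

lemma D_nonneg (hH : HypH P ρ) (ν : Measure M) [IsFiniteMeasure ν] :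
    0 ≤ᵐ[ρ] ((∫ x, Gmap hH x ∂ν : Lp ℝ 1 ρ) : M → ℝ) := by
  refine ae_nonneg_of_forall_setIntegral_nonneg (L1.integrable_coeFn _) fun s hs _ => ?_
  rw [setIntegral_D hH ν hs]
  exact integral_nonneg fun x => ENNReal.toReal_nonneg

lemma bind_eq_withDensity (hH : HypH P ρ) (ν : Measure M) [IsProbabilityMeasure ν] :
    ν.bind P = ρ.withDensity (fun y => ENNReal.ofReal ((∫ x, Gmap hH x ∂ν : Lp ℝ 1 ρ) y)) := by
  refine Measure.ext fun A hA => ?_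
  have hmeas : Measurable fun x => P x A := (Measure.measurable_coe hA).comp hH.meas
  have hfin2 : ∫⁻ x, P x A ∂ν ≠ ⊤ := by
    refine ((lintegral_mono fun x =>
      (measure_mono (Set.subset_univ A)).trans (hH.subMarkov x)).trans_lt ?_).ne
    rw [lintegral_one]
    exact measure_lt_top _ _
  have hlhs : ENNReal.ofReal (∫ x, (P x A).toReal ∂ν) = ν.bind P A := by
    rw [integral_toReal hmeas.aemeasurable
        (ae_of_all _ fun x => (meas_apply_ne_top hH x A).lt_top),
      ENNReal.ofReal_toReal hfin2, Measure.bind_apply hA hH.meas.aemeasurable]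
  have hrhs : ρ.withDensity (fun y => ENNReal.ofReal ((∫ x, Gmap hH x ∂ν : Lp ℝ 1 ρ) y)) A
      = ENNReal.ofReal (∫ y in A, (∫ x, Gmap hH x ∂ν : Lp ℝ 1 ρ) y ∂ρ) := by
    rw [withDensity_apply _ hA, ← ofReal_integral_eq_lintegral_ofReal
      ((L1.integrable_coeFn _).restrict) (ae_restrict_of_ae (D_nonneg hH ν))]
  rw [hrhs, setIntegral_D hH ν hA, hlhs]

end LpPart
section Main

variable [MetricSpace M] [CompactSpace M] [MeasurableSpace M] [BorelSpace M]
variable {ρ : Measure M} [IsFiniteMeasure ρ] {P : M → Measure M}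

lemma lint_mul_ofReal_le (q : M → ℝ≥0∞) (hq1 : ∀ y, q y ≤ 1) (a b : Lp ℝ 1 ρ) :
    ∫⁻ y, q y * ENNReal.ofReal (a y) ∂ρ
      ≤ (∫⁻ y, q y * ENNReal.ofReal (b y) ∂ρ) + ENNReal.ofReal ‖a - b‖ := by
  rw [ofReal_norm_Lp (a - b)]
  have hsum : ∫⁻ y, (q y * ENNReal.ofReal (b y) + (‖(a - b : Lp ℝ 1 ρ) y‖₊ : ℝ≥0∞)) ∂ρ
      = (∫⁻ y, q y * ENNReal.ofReal (b y) ∂ρ)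
        + ∫⁻ y, (‖(a - b : Lp ℝ 1 ρ) y‖₊ : ℝ≥0∞) ∂ρ :=
    lintegral_add_right' _ (Lp.aestronglyMeasurable (a - b)).enorm
  rw [← hsum]
  refine lintegral_mono_ae ?_
  filter_upwards [Lp.coeFn_sub a b] with y hy
  have h2 : ENNReal.ofReal (a y) ≤ ENNReal.ofReal (b y) + (‖a y - b y‖₊ : ℝ≥0∞) := by
    calc ENNReal.ofReal (a y) = ENNReal.ofReal (b y + (a y - b y)) := by ring_nf
      _ ≤ ENNReal.ofReal (b y) + ENNReal.ofReal (a y - b y) := ENNReal.ofReal_add_le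
      _ ≤ ENNReal.ofReal (b y) + (‖a y - b y‖₊ : ℝ≥0∞) := by
          rw [← enorm_eq_nnnorm, Real.enorm_eq_ofReal_abs]
          exact add_le_add_right (ENNReal.ofReal_le_ofReal (le_abs_self _)) _
  calc q y * ENNReal.ofReal (a y)
      ≤ q y * (ENNReal.ofReal (b y) + (‖a y - b y‖₊ : ℝ≥0∞)) := mul_le_mul_right h2 _
    _ = q y * ENNReal.ofReal (b y) + q y * (‖a y - b y‖₊ : ℝ≥0∞) := mul_add _ _ _
    _ ≤ q y * ENNReal.ofReal (b y) + 1 * (‖a y - b y‖₊ : ℝ≥0∞) :=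
        add_le_add le_rfl (mul_le_mul_left (hq1 y) _)
    _ = q y * ENNReal.ofReal (b y) + (‖(a - b : Lp ℝ 1 ρ) y‖₊ : ℝ≥0∞) := by
        rw [one_mul, hy, Pi.sub_apply]

lemma wd_apply_eq (a : Lp ℝ 1 ρ) {A : Set M} (hA : MeasurableSet A) :
    ρ.withDensity (fun y => ENNReal.ofReal (a y)) A
      = ∫⁻ y, (A.indicator (fun _ => (1:ℝ≥0∞)) y) * ENNReal.ofReal (a y) ∂ρ := by
  rw [withDensity_apply _ hA, ← lintegral_indicator hA]
  congr 1
  funext y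
  by_cases hy : y ∈ A <;> simp [Set.indicator_apply, hy]

lemma wd_bind_apply (hH : HypH P ρ) (a : Lp ℝ 1 ρ) {A : Set M} (hA : MeasurableSet A) :
    (ρ.withDensity (fun y => ENNReal.ofReal (a y))).bind P A
      = ∫⁻ y, P y A * ENNReal.ofReal (a y) ∂ρ := by
  have haemeas : AEMeasurable (fun y => ENNReal.ofReal (a y)) ρ :=
    ENNReal.measurable_ofReal.comp_aemeasurable (Lp.aestronglyMeasurable a).aemeasurable
  have hg : AEMeasurable (fun y => P y A) ρ := by
    exact ((Measure.measurable_coe hA).comp hH.meas).aemeasurable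
  rw [Measure.bind_apply hA hH.meas.aemeasurable,
    lintegral_withDensity_eq_lintegral_mul₀ haemeas hg]
  exact lintegral_congr fun y => mul_comm _ _

set_option maxHeartbeats 1000000 in
set_option synthInstance.maxHeartbeats 400000 in
lemma exists_invariant (hH : HypH P ρ) (hfull : ∀ x, P x Set.univ = 1) :
    ∃ μ : Measure M, IsProbabilityMeasure μ ∧ μ.bind P = μ := by
  obtain ⟨x₀, -⟩ : ({x | P x Set.univ ≠ 0} : Set M).Nonempty :=
    Set.nonempty_iff_ne_empty.mpr fun h => hH.rhoPos.ne' (by rw [h, measure_empty])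
  have hiter_prob : ∀ k, IsProbabilityMeasure (iterP P k x₀) :=
    fun k => ⟨iterP_univ hH.meas hfull k x₀⟩
  set c : ℕ → ℝ≥0∞ := fun n => (((n+1 : ℕ) : ℝ≥0∞))⁻¹ with hcdef
  have hnat_ne : ∀ n : ℕ, ((n+1 : ℕ) : ℝ≥0∞) ≠ 0 :=
    fun n => Nat.cast_ne_zero.mpr (Nat.succ_ne_zero n)
  have hnat_nt : ∀ n : ℕ, ((n+1 : ℕ) : ℝ≥0∞) ≠ ⊤ := fun n => ENNReal.natCast_ne_top _
  set msum : ℕ → ℕ → Measure M := fun k n =>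
    c n • ∑ m ∈ Finset.range (n+1), iterP P (m+k) x₀ with hmsumdef
  have hmsum_apply : ∀ k n (A : Set M),
      msum k n A = c n * ∑ m ∈ Finset.range (n+1), iterP P (m+k) x₀ A := by
    intro k n A
    simp [hmsumdef, Measure.smul_apply, Measure.finset_sum_apply, smul_eq_mul]
  have hmsum_prob : ∀ k n, IsProbabilityMeasure (msum k n) := by
    intro k n
    constructor
    rw [hmsum_apply]
    have huniv : ∀ m ∈ Finset.range (n+1), iterP P (m+k) x₀ Set.univ = 1 :=
      fun m _ => iterP_univ hH.meas hfull _ x₀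
    rw [Finset.sum_congr rfl huniv, Finset.sum_const, Finset.card_range, nsmul_eq_mul,
      mul_one]
    exact ENNReal.inv_mul_cancel (hnat_ne n) (hnat_nt n)
  have hmsum_bind : ∀ k n, (msum k n).bind P = msum (k+1) n := by
    intro k n
    refine Measure.ext fun A hA => ?_
    rw [Measure.bind_apply hA hH.meas.aemeasurable, hmsumdef]
    simp only [lintegral_smul_measure, lintegral_finset_sum_measure]
    rw [hmsum_apply]
    congr 1
    refine Finset.sum_congr rfl fun m _ => ?_
    rw [← Measure.bind_apply hA hH.meas.aemeasurable, iterP_bind hH.meas]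
    rfl
  have hble : ∀ m (A : Set M), iterP P m x₀ A ≤ 1 := fun m A =>
    (measure_mono (Set.subset_univ A)).trans_eq (iterP_univ hH.meas hfull m x₀)
  -- telescoping inequalities
  have htel : ∀ n (A : Set M),
      (msum 3 n A ≤ msum 2 n A + c n) ∧ (msum 2 n A ≤ msum 3 n A + c n) := by
    intro n A
    set b : ℕ → ℝ≥0∞ := fun m => iterP P (m+2) x₀ A with hbdef
    have hsum_eq : (∑ m ∈ Finset.range (n+1), b (m+1)) + b 0
        = (∑ m ∈ Finset.range (n+1), b m) + b (n+1) := by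
      have h1 := Finset.sum_range_succ' b (n+1)
      have h2 := Finset.sum_range_succ b (n+1)
      rw [← h1, h2]
    have htel_eq : msum 3 n A + c n * b 0 = msum 2 n A + c n * b (n+1) := by
      rw [hmsum_apply, hmsum_apply, ← mul_add, ← mul_add, hsum_eq]
    have hcb : ∀ m, c n * b m ≤ c n := fun m => by
      calc c n * b m ≤ c n * 1 := mul_le_mul_right (hble _ _) _
        _ = c n := mul_one _
    constructor
    · calc msum 3 n A ≤ msum 3 n A + c n * b 0 := le_self_add
        _ = msum 2 n A + c n * b (n+1) := htel_eq
        _ ≤ msum 2 n A + c n := add_le_add_right (hcb _) _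
    · calc msum 2 n A ≤ msum 2 n A + c n * b (n+1) := le_self_add
        _ = msum 3 n A + c n * b 0 := htel_eq.symm
        _ ≤ msum 3 n A + c n := add_le_add_right (hcb _) _
  -- densities
  set d : ℕ → Lp ℝ 1 ρ := fun n => (∫ x, Gmap hH x ∂(msum 1 n) : Lp ℝ 1 ρ) with hddef
  have hrep : ∀ n, msum 2 n = ρ.withDensity (fun y => ENNReal.ofReal (d n y)) := by
    intro n
    haveI := hmsum_prob 1 n
    rw [← hmsum_bind 1 n]
    exact bind_eq_withDensity hH (msum 1 n)
  set K : Set (Lp ℝ 1 ρ) := closure (convexHull ℝ (Set.range (Gmap hH))) with hKdef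
  have hKcompact : IsCompact K :=
    TotallyBounded.isCompact_of_isClosed
      ((totallyBounded_convexHull.mpr
        (isCompact_range (continuous_Gmap hH)).totallyBounded).closure) isClosed_closure
  have hdK : ∀ n, d n ∈ K := by
    intro n
    haveI := hmsum_prob 1 n
    haveI : IsFiniteMeasure (msum 1 n) :=
      ⟨by rw [(hmsum_prob 1 n).measure_univ]; exact ENNReal.one_lt_top⟩
    have hint : Integrable (Gmap hH) (msum 1 n) := integrable_Gmap hH (msum 1 n)
    exact Convex.integral_mem ((convex_convexHull ℝ _).closure) isClosed_closure
      (ae_of_all _ fun x => subset_closure (subset_convexHull ℝ _ (Set.mem_range_self x)))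
      hint
  obtain ⟨h, hhK, φ, hφ, hconv⟩ := hKcompact.tendsto_subseq hdK
  set μ := ρ.withDensity (fun y => ENNReal.ofReal (h y)) with hμdef
  set e : ℕ → ℝ≥0∞ := fun j => ENNReal.ofReal ‖d (φ j) - h‖ with hedef
  have he0 : Tendsto e atTop (𝓝 0) := by
    have h1 : Tendsto (fun j => ‖d (φ j) - h‖) atTop (𝓝 0) := by
      have h2 := hconv.dist (tendsto_const_nhds (x := h))
      simpa [dist_eq_norm, Function.comp] using h2
    have h3 := ENNReal.tendsto_ofReal h1
    simpa [hedef] using h3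
  have hc0 : Tendsto (fun j => c (φ j)) atTop (𝓝 0) := by
    have h1 : Tendsto (fun j => φ j + 1) atTop atTop :=
      (tendsto_add_atTop_nat 1).comp hφ.tendsto_atTop
    exact ENNReal.tendsto_inv_nat_nhds_zero.comp h1
  -- per-set bounds
  have hq_ind : ∀ (A : Set M) (y : M), A.indicator (fun _ => (1:ℝ≥0∞)) y ≤ 1 := by
    intro A y
    by_cases hy : y ∈ A <;> simp [Set.indicator_apply, hy]
  have hq_P : ∀ (A : Set M) (y : M), P y A ≤ 1 := fun A y =>
    (measure_mono (Set.subset_univ A)).trans (hH.subMarkov y)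
  have hwd_le : ∀ (a b : Lp ℝ 1 ρ) (A : Set M), MeasurableSet A →
      ρ.withDensity (fun y => ENNReal.ofReal (a y)) A
        ≤ ρ.withDensity (fun y => ENNReal.ofReal (b y)) A + ENNReal.ofReal ‖a - b‖ := by
    intro a b A hA
    rw [wd_apply_eq a hA, wd_apply_eq b hA]
    exact lint_mul_ofReal_le _ (hq_ind A) a b
  have hwdb_le : ∀ (a b : Lp ℝ 1 ρ) (A : Set M), MeasurableSet A →
      (ρ.withDensity (fun y => ENNReal.ofReal (a y))).bind P A
        ≤ (ρ.withDensity (fun y => ENNReal.ofReal (b y))).bind P A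
          + ENNReal.ofReal ‖a - b‖ := by
    intro a b A hA
    rw [wd_bind_apply hH a hA, wd_bind_apply hH b hA]
    exact lint_mul_ofReal_le _ (hq_P A) a b
  have hnorm_symm : ∀ j, ENNReal.ofReal ‖h - d (φ j)‖ = e j := fun j => by
    rw [hedef, norm_sub_rev]
  -- limits
  have hlim : ∀ (v : ℝ≥0∞),
      Tendsto (fun j => ((v + e j) + c (φ j)) + e j) atTop (𝓝 v) := by
    intro v
    have := ((tendsto_const_nhds (x := v)).add he0).add hc0 |>.add he0
    simpa using this
  have hkey : ∀ (A : Set M), MeasurableSet A → μ.bind P A = μ A := by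
    intro A hA
    have hub : ∀ j, μ.bind P A ≤ ((μ A + e j) + c (φ j)) + e j := by
      intro j
      have s1 : μ.bind P A ≤ msum 3 (φ j) A + e j := by
        rw [hμdef]
        calc (ρ.withDensity fun y => ENNReal.ofReal (h y)).bind P A
            ≤ (ρ.withDensity fun y => ENNReal.ofReal (d (φ j) y)).bind P A + e j := by
              have h5 := hwdb_le h (d (φ j)) A hA
              rwa [hnorm_symm j] at h5
          _ = (msum 2 (φ j)).bind P A + e j := by rw [← hrep (φ j)]
          _ = msum 3 (φ j) A + e j := by rw [hmsum_bind 2 (φ j)]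
      have s2 : msum 3 (φ j) A ≤ msum 2 (φ j) A + c (φ j) := (htel (φ j) A).1
      have s3 : msum 2 (φ j) A ≤ μ A + e j := by
        rw [hrep (φ j), hμdef]
        exact (hwd_le (d (φ j)) h A hA).trans (by rw [hedef])
      calc μ.bind P A ≤ msum 3 (φ j) A + e j := s1
        _ ≤ (msum 2 (φ j) A + c (φ j)) + e j := add_le_add_left s2 _
        _ ≤ ((μ A + e j) + c (φ j)) + e j := by
            exact add_le_add_left (add_le_add_left s3 _) _
    have hlb : ∀ j, μ A ≤ ((μ.bind P A + e j) + c (φ j)) + e j := by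
      intro j
      have s1 : μ A ≤ msum 2 (φ j) A + e j := by
        rw [hrep (φ j), hμdef]
        have h5 := hwd_le h (d (φ j)) A hA
        rwa [hnorm_symm j] at h5
      have s2 : msum 2 (φ j) A ≤ msum 3 (φ j) A + c (φ j) := (htel (φ j) A).2
      have s3 : msum 3 (φ j) A ≤ μ.bind P A + e j := by
        rw [← hmsum_bind 2 (φ j), hrep (φ j), hμdef]
        exact (hwdb_le (d (φ j)) h A hA).trans (by rw [hedef])
      calc μ A ≤ msum 2 (φ j) A + e j := s1
        _ ≤ (msum 3 (φ j) A + c (φ j)) + e j := add_le_add_left s2 _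
        _ ≤ ((μ.bind P A + e j) + c (φ j)) + e j := by
            exact add_le_add_left (add_le_add_left s3 _) _
    exact le_antisymm (ge_of_tendsto' (hlim (μ A)) hub)
      (ge_of_tendsto' (hlim (μ.bind P A)) hlb)
  have hinv : μ.bind P = μ := Measure.ext fun A hA => hkey A hA
  have hprob : IsProbabilityMeasure μ := by
    constructor
    have hub : ∀ j, μ Set.univ ≤ ((1 + e j) + c (φ j)) + e j := by
      intro j
      haveI := hmsum_prob 2 (φ j)
      have s1 : μ Set.univ ≤ msum 2 (φ j) Set.univ + e j := by
        rw [hrep (φ j), hμdef]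
        have h5 := hwd_le h (d (φ j)) Set.univ MeasurableSet.univ
        rwa [hnorm_symm j] at h5
      rw [(hmsum_prob 2 (φ j)).measure_univ] at s1
      exact s1.trans (le_add_of_le_of_nonneg (le_add_of_le_of_nonneg le_rfl zero_le) zero_le)
    have hlb : ∀ j, (1 : ℝ≥0∞) ≤ ((μ Set.univ + e j) + c (φ j)) + e j := by
      intro j
      haveI := hmsum_prob 2 (φ j)
      have s1 : msum 2 (φ j) Set.univ ≤ μ Set.univ + e j := by
        rw [hrep (φ j), hμdef]
        exact (hwd_le (d (φ j)) h Set.univ MeasurableSet.univ).trans (by rw [hedef])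
      rw [(hmsum_prob 2 (φ j)).measure_univ] at s1
      exact s1.trans (le_add_of_le_of_nonneg (le_add_of_le_of_nonneg le_rfl zero_le) zero_le)
    exact le_antisymm (ge_of_tendsto' (hlim 1) hub) (ge_of_tendsto' (hlim (μ Set.univ)) hlb)
  exact ⟨μ, hprob, hinv⟩

end Main

end StationaryAux

/-- **Theorem A (a).** Under Hypothesis (H), if `P(x,M) = 1` for every `x ∈ M`, then `P`
admits a unique stationary Borel probability measure `μ` (`ℒμ = μ`), and `supp μ = M`
(every nonempty open set has positive `μ`-measure). -/
theorem stationary_exists_unique_of_hypH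
    [MetricSpace M] [CompactSpace M] [MeasurableSpace M] [BorelSpace M]
    (ρ : Measure M) [IsFiniteMeasure ρ] (P : M → Measure M)
    (hH : HypH P ρ) (hfull : ∀ x, P x Set.univ = 1) :
    ∃ μ : Measure M, (IsProbabilityMeasure μ ∧ μ.bind P = μ) ∧
      (∀ U : Set M, IsOpen U → U.Nonempty → 0 < μ U) ∧
      (∀ μ' : Measure M, IsProbabilityMeasure μ' → μ'.bind P = μ' → μ' = μ) := by
  obtain ⟨μ, hprob, hinv⟩ := StationaryAux.exists_invariant hH hfull
  have hμne : μ ≠ 0 := by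
    intro h0
    have := hprob.measure_univ
    rw [h0] at this
    simp at this
  refine ⟨μ, ⟨hprob, hinv⟩, ?_, ?_⟩
  · intro U hU hUne
    exact StationaryAux.full_support hH hfull hinv hμne hU hUne
  · intro μ' hμ' hinv'
    haveI := hμ'
    haveI := hprob
    exact StationaryAux.eq_of_invariant hH hfull μ' μ hinv' hinv
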